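/- Fix integers 1 ≤ ℓ ≤ k and n ≥ 1. For every randomized rank-based online algorithm A that accepts at most k of n arrivals and every ε > 0, there exists an injective vector of nonnegative reals v : {1,…,n} → ℝ_{≥0} such that, when σ is a uniformly random permutation of {1,…,n} and w_i = v(σ(i)), the accepted set S satisfies E[TOP_ℓ(S; w)] ≤ ( (1 + 1/n)·(1 − e^{−k}) + ε ) · TOP_ℓ(v). -/

import Mathlib

open MeasureTheory Finset

/-- `TOPval ℓ A v` is the maximum of `∑ i ∈ B, v i` over `B ⊆ A` with `|B| ≤ ℓ`. -/
noncomputable def TOPval {n : ℕ} (ℓ : ℕ) (A : Finset (Fin n)) (v : Fin n → ℝ) : ℝ :=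
  ((A.powerset.filter fun B => B.card ≤ ℓ).image fun B => ∑ i ∈ B, v i).max'
    (Finset.Nonempty.image
      ⟨∅, Finset.mem_filter.mpr ⟨Finset.empty_mem_powerset A, by simp⟩⟩ _)

/-- A randomized rank-based online algorithm with capacity `k`: it receives a uniform random
seed `u ∈ [0,1]` and the arrival sequence `w`, outputs a set of at most `k` arrivals, its
decision about arrival `i` depends only on the seed and the relative order of `w₁,…,wᵢ`
(which also makes it online), and it is measurable in the seed. -/
structure RankAlg (n k : ℕ) where
  run : ℝ → (Fin n → ℝ) → Finset (Fin n)
  card_le : ∀ u w, (run u w).card ≤ k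
  rankBased : ∀ u (w w' : Fin n → ℝ) (i : Fin n),
    (∀ j j' : Fin n, j ≤ i → j' ≤ i → (w j < w j' ↔ w' j < w' j')) →
    (i ∈ run u w ↔ i ∈ run u w')
  meas : ∀ (i : Fin n) (w : Fin n → ℝ), MeasurableSet {u : ℝ | i ∈ run u w}

private lemma lp_step (N c x : ℝ) (hN : 1 ≤ N) (hc0 : 0 < c) (hc1 : c ≤ 1)
    (hx0 : 0 ≤ x) (hx1 : N * x ≤ 1) :
    N * (1 - c) + N * x ≤ (N + 1) * (1 - c * Real.exp (-x)) := by
  have hex : Real.exp (-x) * (1 + x) ≤ 1 := by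
    have h1 : x + 1 ≤ Real.exp x := Real.add_one_le_exp x
    calc Real.exp (-x) * (1 + x) ≤ Real.exp (-x) * Real.exp x := by
          apply mul_le_mul_of_nonneg_left (by linarith) (Real.exp_nonneg _)
      _ = 1 := by rw [← Real.exp_add]; simp
  have hxpos : (0:ℝ) < 1 + x := by linarith
  have key : (N + 1) * c ≤ (1 + N * c - N * x) * (1 + x) := by
    nlinarith [mul_nonneg (sub_nonneg.2 hc1) (sub_nonneg.2 hx1),
      mul_nonneg hx0 (sub_nonneg.2 hx1), mul_nonneg hx0 (sub_nonneg.2 hc1)]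
  have h2 : (N + 1) * (c * Real.exp (-x)) ≤ 1 + N * c - N * x := by
    have h3 : (N + 1) * (c * Real.exp (-x)) * (1 + x) ≤ (1 + N * c - N * x) * (1 + x) := by
      calc (N + 1) * (c * Real.exp (-x)) * (1 + x)
          = (N+1) * c * (Real.exp (-x) * (1 + x)) := by ring
        _ ≤ (N+1) * c * 1 := by
            apply mul_le_mul_of_nonneg_left hex; positivity
        _ = (N+1)*c := by ring
        _ ≤ _ := key
    exact le_of_mul_le_mul_right h3 hxpos
  nlinarith

private lemma lp_main (m : ℕ) (a : ℕ → ℝ) (ha : ∀ i < m, 0 ≤ a i ∧ a i ≤ 1/(i+1)) :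
    ∑ i ∈ range m, ((i:ℝ)+1) * a i ≤ ((m:ℝ)+1) * (1 - Real.exp (-(∑ i ∈ range m, a i))) := by
  induction m with
  | zero => simp
  | succ m ih =>
    have IH := ih (fun i hi => ha i (by omega))
    rw [Finset.sum_range_succ, Finset.sum_range_succ (f := a)]
    have hA0 : 0 ≤ ∑ i ∈ range m, a i :=
      Finset.sum_nonneg fun i hi => (ha i (by simpa using Nat.lt_succ_of_lt (mem_range.mp hi))).1
    set A := ∑ i ∈ range m, a i with hA
    have ham := ha m (Nat.lt_succ_self m)
    have hc1 : Real.exp (-A) ≤ 1 := Real.exp_le_one_iff.2 (by linarith)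
    have hxm : ((m:ℝ)+1) * a m ≤ 1 := by
      have h := ham.2
      rw [le_div_iff₀ (by positivity)] at h
      linarith
    have step := lp_step ((m:ℝ)+1) (Real.exp (-A)) (a m)
      (by linarith [Nat.cast_nonneg (α := ℝ) m]) (Real.exp_pos _) hc1 ham.1 hxm
    have hee : Real.exp (-A) * Real.exp (-(a m)) = Real.exp (-(A + a m)) := by
      rw [← Real.exp_add]; ring_nf
    push_cast
    nlinarith [step, IH]

private lemma relmax_count (n : ℕ) (i : Fin n) :
    (i.val + 1) * (Finset.univ.filter
      fun σ : Equiv.Perm (Fin n) => ∀ j < i, σ j < σ i).card = n.factorial := by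
  classical
  have hne : ∀ σ : Equiv.Perm (Fin n), ((Finset.Iic i).image σ).Nonempty :=
    fun σ => Finset.Nonempty.image ⟨i, Finset.mem_Iic.2 le_rfl⟩ _
  set h : Equiv.Perm (Fin n) → Fin n :=
    fun σ => σ.symm (((Finset.Iic i).image σ).max' (hne σ)) with hh
  have hchar : ∀ (σ : Equiv.Perm (Fin n)) (j : Fin n),
      h σ = j ↔ (j ≤ i ∧ ∀ j' ≤ i, j' ≠ j → σ j' < σ j) := by
    intro σ j
    constructor
    · intro hj
      have hmem := Finset.max'_mem _ (hne σ)
      obtain ⟨j₀, hj₀, hj₀e⟩ := Finset.mem_image.1 hmem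
      have hji : h σ = j₀ := by rw [hh]; simp only [← hj₀e, Equiv.symm_apply_apply]
      have : j = j₀ := by rw [← hj, hji]
      subst this
      refine ⟨Finset.mem_Iic.1 hj₀, fun j' hj' hne' => ?_⟩
      have hle : σ j' ≤ σ j := by
        rw [hj₀e]
        exact Finset.le_max' _ _ (Finset.mem_image_of_mem σ (Finset.mem_Iic.2 hj'))
      exact lt_of_le_of_ne hle (fun hcon => hne' (σ.injective hcon))
    · rintro ⟨hji, hmax⟩
      have hmaxeq : ((Finset.Iic i).image σ).max' (hne σ) = σ j := by
        apply le_antisymm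
        · apply Finset.max'_le
          intro y hy
          obtain ⟨j', hj', rfl⟩ := Finset.mem_image.1 hy
          rcases eq_or_ne j' j with rfl | hne'
          · exact le_rfl
          · exact (hmax j' (Finset.mem_Iic.1 hj') hne').le
        · exact Finset.le_max' _ _ (Finset.mem_image_of_mem σ (Finset.mem_Iic.2 hji))
      rw [hh]; simp only [hmaxeq, Equiv.symm_apply_apply]
  have hpart := Finset.card_eq_sum_card_fiberwise
    (f := h) (s := (Finset.univ : Finset (Equiv.Perm (Fin n)))) (t := Finset.Iic i)
    (fun σ _ => by
      rcases (hchar σ (h σ)).1 rfl with ⟨h1, _⟩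
      exact Finset.mem_Iic.2 h1)
  have hconst : ∀ j ∈ Finset.Iic i,
      (Finset.univ.filter fun σ => h σ = j).card
        = (Finset.univ.filter fun σ => h σ = i).card := by
    intro j hj
    have hj' : j ≤ i := Finset.mem_Iic.1 hj
    apply Finset.card_bij' (i := fun σ _ => (Equiv.swap j i).trans σ)
      (j := fun σ _ => (Equiv.swap j i).trans σ)
    · intro σ hσ
      simp only [Finset.mem_filter, Finset.mem_univ, true_and] at hσ ⊢
      rcases (hchar σ j).1 hσ with ⟨_, hmax⟩
      rw [hchar]
      refine ⟨le_rfl, fun j' hj'le hj'ne => ?_⟩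
      simp only [Equiv.trans_apply, Equiv.swap_apply_right]
      rcases eq_or_ne j' j with rfl | hj'j
      · simpa using hmax i le_rfl (Ne.symm hj'ne)
      · rw [Equiv.swap_apply_of_ne_of_ne hj'j hj'ne]
        exact hmax j' hj'le hj'j
    · intro σ hσ
      simp only [Finset.mem_filter, Finset.mem_univ, true_and] at hσ ⊢
      rcases (hchar σ i).1 hσ with ⟨_, hmax⟩
      rw [hchar]
      refine ⟨hj', fun j' hj'le hj'ne => ?_⟩
      simp only [Equiv.trans_apply, Equiv.swap_apply_left]
      rcases eq_or_ne j' i with rfl | hj'i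
      · simpa using hmax j hj' (Ne.symm hj'ne)
      · rw [Equiv.swap_apply_of_ne_of_ne hj'ne hj'i]
        exact hmax j' hj'le hj'i
    · intro σ _
      ext x
      simp [← Equiv.trans_assoc]
    · intro σ _
      ext x
      simp [← Equiv.trans_assoc]
  have hfin : (Finset.univ.filter fun σ => h σ = i)
      = (Finset.univ.filter fun σ : Equiv.Perm (Fin n) => ∀ j < i, σ j < σ i) := by
    ext σ
    simp only [Finset.mem_filter, Finset.mem_univ, true_and]
    rw [hchar]
    constructor
    · rintro ⟨_, hmax⟩ j hji
      exact hmax j hji.le hji.ne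
    · intro hrel
      exact ⟨le_rfl, fun j' hj' hj'ne => hrel j' (lt_of_le_of_ne hj' hj'ne)⟩
  calc (i.val + 1) * _
      = ∑ _j ∈ Finset.Iic i, (Finset.univ.filter fun σ => h σ = i).card := by
        rw [Finset.sum_const, Fin.card_Iic, smul_eq_mul, hfin]
    _ = ∑ j ∈ Finset.Iic i, (Finset.univ.filter fun σ => h σ = j).card := by
        exact (Finset.sum_congr rfl hconst).symm
    _ = (Finset.univ : Finset (Equiv.Perm (Fin n))).card := hpart.symm
    _ = n.factorial := by simp [Fintype.card_perm]

private lemma subtypeCongr_left {α} {p q : α → Prop} [DecidablePred p] [DecidablePred q]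
    (e : {x // p x} ≃ {x // q x}) (f : {x // ¬p x} ≃ {x // ¬q x}) (a : α) (h : p a) :
    Equiv.subtypeCongr e f a = (e ⟨a, h⟩ : {x // q x}) := by
  simp [Equiv.subtypeCongr, h]

private lemma subtypeCongr_right {α} {p q : α → Prop} [DecidablePred p] [DecidablePred q]
    (e : {x // p x} ≃ {x // q x}) (f : {x // ¬p x} ≃ {x // ¬q x}) (a : α) (h : ¬p a) :
    Equiv.subtypeCongr e f a = (f ⟨a, h⟩ : {x // ¬q x}) := by
  simp [Equiv.subtypeCongr, h]

private lemma exists_transfer {n : ℕ} {J : Type*} [Fintype J]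
    (g g' : J → Fin n) (hg : Function.Injective g) (hg' : Function.Injective g') :
    ∃ ρ : Equiv.Perm (Fin n), (∀ j, ρ (g j) = g' j) ∧
      (∀ x y : Fin n, (∀ j, g j ≠ x) → (∀ j, g j ≠ y) → (x < y ↔ ρ x < ρ y)) := by
  classical
  set P : Fin n → Prop := fun x => x ∈ Set.range g with hP
  set Q : Fin n → Prop := fun x => x ∈ Set.range g' with hQ
  let e : {x // P x} ≃ {x // Q x} :=
    (Equiv.ofInjective g hg).symm.trans (Equiv.ofInjective g' hg')
  set A : Finset (Fin n) := Finset.univ.filter (fun x => ¬ P x) with hA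
  set A' : Finset (Fin n) := Finset.univ.filter (fun x => ¬ Q x) with hA'
  have hcardP : (Finset.univ.filter (fun x => P x)).card
      = (Finset.univ.filter (fun x => Q x)).card := by
    have h1 : Finset.univ.filter (fun x => P x) = Finset.univ.image g := by
      ext x; simp [hP, eq_comm]
    have h2 : Finset.univ.filter (fun x => Q x) = Finset.univ.image g' := by
      ext x; simp [hQ, eq_comm]
    rw [h1, h2, Finset.card_image_of_injective _ hg, Finset.card_image_of_injective _ hg']
  have hcard : A.card = A'.card := by
    have h1 := Finset.card_filter_add_card_filter_not
      (s := (Finset.univ : Finset (Fin n))) (p := fun x => P x)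
    have h2 := Finset.card_filter_add_card_filter_not
      (s := (Finset.univ : Finset (Fin n))) (p := fun x => Q x)
    rw [hA, hA']
    omega
  let oi : Fin A.card ≃o A := A.orderIsoOfFin rfl
  let oi' : Fin A.card ≃o A' := A'.orderIsoOfFin hcard.symm
  have memA : ∀ x, ¬ P x ↔ x ∈ A := by intro x; simp [hA]
  have memA' : ∀ x, ¬ Q x ↔ x ∈ A' := by intro x; simp [hA']
  let f : {x // ¬ P x} ≃ {x // ¬ Q x} :=
    ((Equiv.subtypeEquivRight memA).trans (oi.symm.toEquiv.trans oi'.toEquiv)).trans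
      (Equiv.subtypeEquivRight memA').symm
  have fval : ∀ a : {x // ¬ P x}, ((f a : {x // ¬ Q x}) : Fin n)
      = ((oi' (oi.symm ⟨a.1, (memA a.1).1 a.2⟩) : A') : Fin n) := by
    intro a; rfl
  have fmono : ∀ a b : {x // ¬ P x}, (a.1 < b.1 ↔ (f a).1 < (f b).1) := by
    intro a b
    rw [fval, fval]
    constructor
    · intro h
      exact Subtype.coe_lt_coe.2 (oi'.lt_iff_lt.2 (oi.symm.lt_iff_lt.2 (Subtype.mk_lt_mk.2 h)))
    · intro h
      exact Subtype.mk_lt_mk.1 (oi.symm.lt_iff_lt.1 (oi'.lt_iff_lt.1 (Subtype.coe_lt_coe.1 h)))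
  refine ⟨Equiv.subtypeCongr e f, ?_, ?_⟩
  · intro j
    have hPj : P (g j) := ⟨j, rfl⟩
    rw [subtypeCongr_left e f _ hPj]
    have h1 : e ⟨g j, hPj⟩
        = Equiv.ofInjective g' hg' ((Equiv.ofInjective g hg).symm ⟨g j, hPj⟩) := rfl
    rw [h1]
    have h2 : (Equiv.ofInjective g hg).symm ⟨g j, hPj⟩ = j := by
      have := Equiv.ofInjective_symm_apply (f := g) hg j
      convert this using 2
    rw [h2, Equiv.ofInjective_apply]
  · intro x y hx hy
    have hPx : ¬ P x := by rintro ⟨j, rfl⟩; exact hx j rfl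
    have hPy : ¬ P y := by rintro ⟨j, rfl⟩; exact hy j rfl
    rw [subtypeCongr_right e f _ hPx, subtypeCongr_right e f _ hPy]
    exact fmono ⟨x, hPx⟩ ⟨y, hPy⟩

private lemma key_count (n k : ℕ) (Alg : RankAlg n k) (u : ℝ) (i t₀ : Fin n)
    (ht₀ : ∀ x : Fin n, x ≤ t₀) :
    n * (Finset.univ.filter fun σ : Equiv.Perm (Fin n) =>
        i ∈ Alg.run u (fun j => ((σ j : ℕ) : ℝ)) ∧ σ i = t₀).card
    = (i.val + 1) * (Finset.univ.filter fun σ : Equiv.Perm (Fin n) =>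
        i ∈ Alg.run u (fun j => ((σ j : ℕ) : ℝ)) ∧ ∀ j < i, σ j < σ i).card := by
  classical
  have hn0 : 0 < n := i.pos
  set Acc : Equiv.Perm (Fin n) → Prop :=
    fun σ => i ∈ Alg.run u (fun j => ((σ j : ℕ) : ℝ)) with hAcc
  have AccIff : ∀ σ τ : Equiv.Perm (Fin n),
      (∀ j j' : Fin n, j ≤ i → j' ≤ i → (σ j < σ j' ↔ τ j < τ j')) → (Acc σ ↔ Acc τ) := by
    intro σ τ h
    refine Alg.rankBased u _ _ i (fun j j' hj hj' => ?_)
    have hcast : ∀ a b : Fin n, ((((a : ℕ)) : ℝ) < (((b : ℕ)) : ℝ)) ↔ a < b := by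
      intro a b
      rw [Nat.cast_lt]
      exact (Fin.lt_def).symm
    rw [hcast, hcast]
    exact h j j' hj hj'
  set J := {j : Fin n // i < j} with hJ
  set G : Equiv.Perm (Fin n) → (J → Fin n) := fun σ j => σ j.1 with hG
  set T : Finset (J → Fin n) := Finset.univ.filter (fun g => Function.Injective g) with hT
  have hGT : ∀ σ : Equiv.Perm (Fin n), G σ ∈ T := by
    intro σ
    rw [hT, Finset.mem_filter]
    exact ⟨Finset.mem_univ _, fun a b hab => Subtype.ext (σ.injective hab)⟩
  set S₁ : Finset (Equiv.Perm (Fin n)) :=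
    Finset.univ.filter (fun σ => Acc σ ∧ σ i = t₀) with hS₁
  set S₂ : Finset (Equiv.Perm (Fin n)) :=
    Finset.univ.filter (fun σ => Acc σ ∧ ∀ j < i, σ j < σ i) with hS₂
  -- facts about fibers
  have hfib : ∀ (σ : Equiv.Perm (Fin n)) (g : J → Fin n), G σ = g →
      ∀ m : Fin n, m ≤ i → ∀ j : J, g j ≠ σ m := by
    rintro σ g rfl m hm j hcon
    have hji : (j : Fin n) = m := σ.injective hcon
    have hj2 := j.2
    rw [hji] at hj2
    exact absurd hj2 (not_lt.2 hm)
  -- transfer between fibers of S₂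
  have htrans : ∀ g g' : J → Fin n, Function.Injective g → Function.Injective g' →
      (S₂.filter (fun σ => G σ = g)).card ≤ (S₂.filter (fun σ => G σ = g')).card := by
    intro g g' hg hg'
    obtain ⟨ρ, hρ1, hρ2⟩ := exists_transfer g g' hg hg'
    apply Finset.card_le_card_of_injOn (fun σ => σ.trans ρ)
    · intro σ hσ
      simp only [hS₂, Finset.mem_coe, Finset.mem_filter, Finset.mem_univ, true_and] at hσ ⊢
      obtain ⟨⟨hacc, hrel⟩, hfibg⟩ := hσ
      have hcmp : ∀ m m' : Fin n, m ≤ i → m' ≤ i → (σ m < σ m' ↔ (σ.trans ρ) m < (σ.trans ρ) m') := by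
        intro m m' hm hm'
        exact hρ2 (σ m) (σ m') (hfib σ g hfibg m hm) (hfib σ g hfibg m' hm')
      refine ⟨⟨?_, ?_⟩, ?_⟩
      · exact (AccIff σ (σ.trans ρ) hcmp).1 hacc
      · intro j hj
        exact (hcmp j i hj.le le_rfl).1 (hrel j hj)
      · funext j
        have h2 : σ j.1 = g j := congrFun hfibg j
        simp only [hG, Equiv.trans_apply]
        rw [h2, hρ1]
    · intro σ _ σ' _ h
      have := congrArg (fun τ : Equiv.Perm (Fin n) => τ.trans ρ.symm) h
      simpa [Equiv.trans_assoc] using this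
  have hconst : ∀ g ∈ T, (S₂.filter (fun σ => G σ = g)).card
      = (S₂.filter (fun σ => G σ = G (Equiv.refl (Fin n)))).card := by
    intro g hgT
    rw [hT, Finset.mem_filter] at hgT
    have hid : Function.Injective (G (Equiv.refl (Fin n))) := by
      intro a b hab
      exact Subtype.ext (by simpa [hG] using hab)
    exact le_antisymm (htrans _ _ hgT.2 hid) (htrans _ _ hid hgT.2)
  set r : ℕ := (S₂.filter (fun σ => G σ = G (Equiv.refl (Fin n)))).card with hr
  -- fibers of S₁
  set good : (J → Fin n) → Prop := fun g => ∀ j : J, g j ≠ t₀ with hgood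
  have hS₁bad : ∀ g : J → Fin n, ¬ good g → (S₁.filter (fun σ => G σ = g)).card = 0 := by
    intro g hbad
    rw [Finset.card_eq_zero, Finset.eq_empty_iff_forall_notMem]
    intro σ hσ
    simp only [hS₁, Finset.mem_filter, Finset.mem_univ, true_and] at hσ
    obtain ⟨⟨_, hit⟩, hfibg⟩ := hσ
    rw [hgood] at hbad
    obtain ⟨j, hj⟩ := not_forall.1 hbad
    have hj' : g j = t₀ := not_not.1 hj
    exact hfib σ g hfibg i le_rfl j (by rw [hj', ← hit])
  have hS₁good : ∀ g : J → Fin n, good g →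
      S₁.filter (fun σ => G σ = g) = S₂.filter (fun σ => G σ = g) := by
    intro g hgd
    ext σ
    simp only [hS₁, hS₂, Finset.mem_filter, Finset.mem_univ, true_and]
    constructor
    · rintro ⟨⟨hacc, hit⟩, hfibg⟩
      refine ⟨⟨hacc, fun j hj => ?_⟩, hfibg⟩
      have h1 : σ j ≠ σ i := fun hcon => absurd (σ.injective hcon) hj.ne
      have h2 : σ j ≤ t₀ := ht₀ _
      rw [hit]
      rw [hit] at h1
      exact lt_of_le_of_ne h2 h1
    · rintro ⟨⟨hacc, hrel⟩, hfibg⟩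
      refine ⟨⟨hacc, ?_⟩, hfibg⟩
      set m := σ.symm t₀ with hm
      have hσm : σ m = t₀ := σ.apply_symm_apply t₀
      rcases lt_trichotomy m i with hlt | heq | hgt
      · exfalso
        have := hrel m hlt
        rw [hσm] at this
        exact absurd (lt_of_le_of_lt (ht₀ (σ i)) this) (lt_irrefl _)
      · rw [← heq, hσm]
      · exfalso
        have h3 : g ⟨m, hgt⟩ = σ m := (congrFun hfibg ⟨m, hgt⟩).symm
        exact hgd ⟨m, hgt⟩ (h3.trans hσm)
  -- sum up
  have hN : S₁.card = ∑ g ∈ T, (S₁.filter (fun σ => G σ = g)).card :=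
    Finset.card_eq_sum_card_fiberwise (fun σ _ => hGT σ)
  have hR : S₂.card = ∑ g ∈ T, (S₂.filter (fun σ => G σ = g)).card :=
    Finset.card_eq_sum_card_fiberwise (fun σ _ => hGT σ)
  have hNval : S₁.card = (T.filter good).card * r := by
    rw [hN, ← Finset.sum_filter_add_sum_filter_not T good]
    have hz : ∑ g ∈ T.filter (fun g => ¬ good g), (S₁.filter (fun σ => G σ = g)).card = 0 :=
      Finset.sum_eq_zero (fun g hg => hS₁bad g (Finset.mem_filter.1 hg).2)
    rw [hz, add_zero]
    rw [Finset.sum_congr rfl (fun g hg => by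
      rw [hS₁good g (Finset.mem_filter.1 hg).2,
        hconst g (Finset.mem_of_mem_filter g hg)])]
    rw [Finset.sum_const, smul_eq_mul]
  have hRval : S₂.card = T.card * r := by
    rw [hR, Finset.sum_congr rfl (fun g hg => hconst g hg), Finset.sum_const, smul_eq_mul]
  -- cardinalities of T and T.filter good
  have hcardT : T.card = Fintype.card (J ↪ Fin n) := by
    rw [hT, ← Fintype.card_subtype]
    exact Fintype.card_congr (Equiv.subtypeInjectiveEquivEmbedding J (Fin n))
  have hcardTg : (T.filter good).card = Fintype.card (J ↪ {x : Fin n // x ≠ t₀}) := by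
    rw [hT, Finset.filter_filter, ← Fintype.card_subtype]
    refine Fintype.card_congr ?_
    refine ⟨fun g => ⟨fun j => ⟨g.1 j, g.2.2 j⟩, fun a b hab => g.2.1 (congrArg Subtype.val hab)⟩,
      fun F => ⟨fun j => (F j).1, ⟨fun a b hab => F.injective (Subtype.ext hab), fun j => (F j).2⟩⟩,
      fun g => rfl, fun F => rfl⟩
  have hcardJ : Fintype.card J = n - 1 - i.val := by
    show Fintype.card {j : Fin n // i < j} = n - 1 - i.val
    rw [Fintype.card_subtype]
    have : Finset.univ.filter (fun j => i < j) = Finset.Ioi i := by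
      ext j; simp
    rw [this, Fin.card_Ioi]
  have hcardsub : Fintype.card {x : Fin n // x ≠ t₀} = n - 1 := by
    have h1 : Fintype.card {x : Fin n // x = t₀} = 1 := Fintype.card_subtype_eq t₀
    have h2 := Fintype.card_subtype_compl (p := fun x : Fin n => x = t₀)
    rw [h1] at h2
    simpa using h2
  set m : ℕ := n - 1 - i.val with hmdef
  have him : i.val < n := i.2
  have harith : n * ((n-1).descFactorial m) = (i.val + 1) * (n.descFactorial m) := by
    have h1 : n.descFactorial (m+1) = (n - m) * n.descFactorial m := Nat.descFactorial_succ n m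
    have h2 : n - m = i.val + 1 := by omega
    obtain ⟨n', rfl⟩ : ∃ n', n = n' + 1 := ⟨n - 1, by omega⟩
    have h3 : (n' + 1).descFactorial (m+1) = (n' + 1) * n'.descFactorial m :=
      Nat.succ_descFactorial_succ n' m
    rw [h2] at h1
    rw [show n' + 1 - 1 = n' by omega]
    rw [← h3, h1]
  have hfinal : n * (T.filter good).card = (i.val + 1) * T.card := by
    rw [hcardT, hcardTg, Fintype.card_embedding_eq, Fintype.card_embedding_eq,
      hcardsub, hcardJ, Fintype.card_fin]
    exact harith
  show n * S₁.card = (i.val + 1) * S₂.card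
  rw [hNval, hRval, ← mul_assoc, ← mul_assoc, hfinal]

private lemma core_bound (n k : ℕ) (hn : 1 ≤ n) (Alg : RankAlg n k) (u : ℝ) (t₀ : Fin n)
    (ht₀ : ∀ x : Fin n, x ≤ t₀) :
    ((Finset.univ.filter fun σ : Equiv.Perm (Fin n) =>
        σ.symm t₀ ∈ Alg.run u (fun j => ((σ j : ℕ) : ℝ))).card : ℝ)
      ≤ (n.factorial : ℝ) * ((1 + 1/(n:ℝ)) * (1 - Real.exp (-(k:ℝ)))) := by
  classical
  have hnpos : (0:ℝ) < n := by exact_mod_cast hn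
  have hfacpos : (0:ℝ) < (n.factorial : ℝ) := by exact_mod_cast n.factorial_pos
  set N : Fin n → ℕ := fun i => (Finset.univ.filter fun σ : Equiv.Perm (Fin n) =>
      i ∈ Alg.run u (fun j => ((σ j : ℕ) : ℝ)) ∧ σ i = t₀).card with hN
  set R : Fin n → ℕ := fun i => (Finset.univ.filter fun σ : Equiv.Perm (Fin n) =>
      i ∈ Alg.run u (fun j => ((σ j : ℕ) : ℝ)) ∧ ∀ j < i, σ j < σ i).card with hR
  -- C = ∑ N i
  have hsplit : (Finset.univ.filter fun σ : Equiv.Perm (Fin n) =>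
      σ.symm t₀ ∈ Alg.run u (fun j => ((σ j : ℕ) : ℝ))).card = ∑ i : Fin n, N i := by
    rw [Finset.card_eq_sum_card_fiberwise
      (f := fun σ : Equiv.Perm (Fin n) => σ.symm t₀) (t := Finset.univ)
      (fun σ _ => Finset.mem_univ _)]
    refine Finset.sum_congr rfl (fun i _ => ?_)
    rw [hN]
    congr 1
    rw [Finset.filter_filter]
    refine Finset.filter_congr (fun σ _ => ?_)
    constructor
    · rintro ⟨hmem, heq⟩
      have hσ : σ i = t₀ := by
        rw [← heq]
        exact σ.apply_symm_apply t₀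
      rw [heq] at hmem
      exact ⟨hmem, hσ⟩
    · rintro ⟨hmem, heq⟩
      have h2 : σ.symm t₀ = i := by rw [← heq, Equiv.symm_apply_apply]
      exact ⟨by rwa [h2], h2⟩
  -- relate N and R
  have hNR : ∀ i : Fin n, (n:ℝ) * (N i : ℝ) = ((i.val:ℝ)+1) * (R i : ℝ) := by
    intro i
    exact_mod_cast congrArg (Nat.cast : ℕ → ℝ) (key_count n k Alg u i t₀ ht₀)
  -- constraints
  have hRle : ∀ i : Fin n, ((i.val:ℕ)+1) * R i ≤ n.factorial := by
    intro i
    rw [← relmax_count n i]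
    refine Nat.mul_le_mul_left _ ?_
    refine Finset.card_le_card ?_
    refine Finset.monotone_filter_right _ (fun σ _ h => h.2)
  have hRsum : ∑ i : Fin n, R i ≤ k * n.factorial := by
    have h1 : ∀ i : Fin n, R i ≤ (Finset.univ.filter fun σ : Equiv.Perm (Fin n) =>
        i ∈ Alg.run u (fun j => ((σ j : ℕ) : ℝ))).card := by
      intro i
      refine Finset.card_le_card ?_
      refine Finset.monotone_filter_right _ (fun σ _ h => h.1)
    calc ∑ i : Fin n, R i ≤ ∑ i : Fin n, (Finset.univ.filter fun σ : Equiv.Perm (Fin n) =>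
          i ∈ Alg.run u (fun j => ((σ j : ℕ) : ℝ))).card := Finset.sum_le_sum (fun i _ => h1 i)
      _ = ∑ σ : Equiv.Perm (Fin n), (Alg.run u (fun j => ((σ j : ℕ) : ℝ))).card := by
          simp_rw [Finset.card_filter]
          rw [Finset.sum_comm]
          refine Finset.sum_congr rfl (fun σ _ => ?_)
          rw [← Finset.card_filter]
          congr 1
          exact Finset.filter_univ_mem _
      _ ≤ ∑ _σ : Equiv.Perm (Fin n), k :=
          Finset.sum_le_sum (fun σ _ => Alg.card_le u _)
      _ = k * n.factorial := by
          rw [Finset.sum_const, smul_eq_mul, Finset.card_univ, Fintype.card_perm,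
            Fintype.card_fin, Nat.mul_comm]
  -- LP
  set a : ℕ → ℝ := fun idx => if h : idx < n then (R ⟨idx, h⟩ : ℝ) / (n.factorial : ℝ) else 0
    with ha
  have haprop : ∀ idx < n, 0 ≤ a idx ∧ a idx ≤ 1/((idx:ℝ)+1) := by
    intro idx hidx
    rw [ha]
    simp only [dif_pos hidx]
    constructor
    · positivity
    · rw [div_le_div_iff₀ hfacpos (by positivity)]
      have := hRle ⟨idx, hidx⟩
      have hcast : ((idx:ℝ)+1) * (R ⟨idx, hidx⟩ : ℝ) ≤ (n.factorial : ℝ) := by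
        exact_mod_cast this
      nlinarith [hcast]
  have hsuma : ∑ idx ∈ range n, a idx ≤ (k:ℝ) := by
    have h1 : ∑ idx ∈ range n, a idx = (∑ i : Fin n, (R i : ℝ)) / (n.factorial : ℝ) := by
      rw [← Fin.sum_univ_eq_sum_range a n, Finset.sum_div]
      refine Finset.sum_congr rfl (fun i _ => ?_)
      rw [ha]
      simp only [dif_pos i.isLt]
    rw [h1, div_le_iff₀ hfacpos]
    have : ((∑ i : Fin n, R i : ℕ) : ℝ) ≤ ((k * n.factorial : ℕ) : ℝ) := by exact_mod_cast hRsum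
    push_cast at this
    linarith
  have hLP := lp_main n a haprop
  have hexp : 1 - Real.exp (-(∑ idx ∈ range n, a idx)) ≤ 1 - Real.exp (-(k:ℝ)) := by
    have := Real.exp_le_exp.2 (neg_le_neg hsuma)
    linarith
  have hLP2 : ∑ idx ∈ range n, ((idx:ℝ)+1) * a idx ≤ ((n:ℝ)+1) * (1 - Real.exp (-(k:ℝ))) := by
    refine le_trans hLP ?_
    have h0 : (0:ℝ) ≤ (n:ℝ)+1 := by positivity
    nlinarith [hexp]
  -- assemble
  have hC : (n:ℝ) * (((Finset.univ.filter fun σ : Equiv.Perm (Fin n) =>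
      σ.symm t₀ ∈ Alg.run u (fun j => ((σ j : ℕ) : ℝ))).card : ℝ))
      = (n.factorial : ℝ) * ∑ idx ∈ range n, ((idx:ℝ)+1) * a idx := by
    rw [hsplit]
    push_cast
    rw [← Fin.sum_univ_eq_sum_range (fun idx => ((idx:ℝ)+1) * a idx) n,
      Finset.mul_sum, Finset.mul_sum]
    refine Finset.sum_congr rfl (fun i _ => ?_)
    rw [hNR i, ha]
    simp only [dif_pos i.isLt, Fin.eta]
    field_simp
  have hfin : (n:ℝ) * (((Finset.univ.filter fun σ : Equiv.Perm (Fin n) =>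
      σ.symm t₀ ∈ Alg.run u (fun j => ((σ j : ℕ) : ℝ))).card : ℝ))
      ≤ (n.factorial : ℝ) * (((n:ℝ)+1) * (1 - Real.exp (-(k:ℝ)))) := by
    rw [hC]
    exact mul_le_mul_of_nonneg_left hLP2 hfacpos.le
  rw [← mul_le_mul_iff_right₀ hnpos]
  calc (n:ℝ) * _ ≤ (n.factorial : ℝ) * (((n:ℝ)+1) * (1 - Real.exp (-(k:ℝ)))) := hfin
    _ = (n:ℝ) * ((n.factorial : ℝ) * ((1 + 1/(n:ℝ)) * (1 - Real.exp (-(k:ℝ))))) := by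
        field_simp

/-- **ℓ-out-of-k secretary impossibility (Theorem 3.6 of Ezra–Feldman–Nehama).**
For every randomized rank-based online algorithm `A` accepting at most `k` of `n` arrivals
and every `ε > 0`, there is an injective nonnegative value vector `v` such that, under a
uniformly random arrival order, the accepted set `S` satisfies
`E[TOP_ℓ(S; w)] ≤ ((1 + 1/n)·(1 − e^{−k}) + ε) · TOP_ℓ(v)`. -/
theorem secretary_impossibility (n k ℓ : ℕ) (hn : 1 ≤ n) (hℓ : 1 ≤ ℓ) (hℓk : ℓ ≤ k)
    (Alg : RankAlg n k) (ε : ℝ) (hε : 0 < ε) :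
    ∃ v : Fin n → ℝ, Function.Injective v ∧ (∀ i, 0 ≤ v i) ∧
      (∫ u in Set.Icc (0 : ℝ) 1, ((n.factorial : ℝ))⁻¹ *
          ∑ σ : Equiv.Perm (Fin n),
            TOPval ℓ (Alg.run u (fun i => v (σ i))) (fun i => v (σ i))) ≤
        ((1 + 1 / (n : ℝ)) * (1 - Real.exp (-(k : ℝ))) + ε) * TOPval ℓ Finset.univ v := by
  classical
  have hnR : (1:ℝ) ≤ (n:ℝ) := by exact_mod_cast hn
  have hnpos : (0:ℝ) < n := by linarith
  have hfacpos : (0:ℝ) < (n.factorial : ℝ) := by exact_mod_cast n.factorial_pos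
  set t₀ : Fin n := ⟨n-1, by omega⟩ with ht₀def
  have ht₀ : ∀ x : Fin n, x ≤ t₀ := by
    intro x
    rw [Fin.le_def]
    have := x.isLt
    simp only [ht₀def]
    omega
  set δ : ℝ := min (ε / (n:ℝ)^2) (1 / (2*(n:ℝ))) with hδdef
  have hδpos : 0 < δ := lt_min (by positivity) (by positivity)
  have hδε : (n:ℝ)^2 * δ ≤ ε := by
    have h1 : δ ≤ ε / (n:ℝ)^2 := min_le_left _ _
    have h2 : (n:ℝ)^2 * (ε / (n:ℝ)^2) = ε := by field_simp
    nlinarith [sq_nonneg (n:ℝ)]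
  have hδhalf : (n:ℝ) * δ ≤ 1/2 := by
    have h1 : δ ≤ 1 / (2*(n:ℝ)) := min_le_right _ _
    have h2 : (n:ℝ) * (1 / (2*(n:ℝ))) = 1/2 := by field_simp
    nlinarith
  set v : Fin n → ℝ := fun m => if m = t₀ then 1 else ((m.val:ℝ)+1) * δ with hv
  have hvt₀ : v t₀ = 1 := by rw [hv]; simp
  have hsmall : ∀ m : Fin n, m ≠ t₀ → v m ≤ (n:ℝ) * δ := by
    intro m hm
    rw [hv]
    simp only [if_neg hm]
    have h1 : (m.val:ℝ) + 1 ≤ n := by exact_mod_cast m.isLt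
    nlinarith
  have hmono : StrictMono v := by
    intro a b hab
    rcases eq_or_ne b t₀ with rfl | hb
    · have ha : a ≠ t₀ := ne_of_lt hab
      calc v a ≤ (n:ℝ)*δ := hsmall a ha
        _ ≤ 1/2 := hδhalf
        _ < 1 := by norm_num
        _ = v t₀ := hvt₀.symm
    · have ha : a ≠ t₀ := by
        intro h
        rw [h] at hab
        exact absurd (lt_of_lt_of_le hab (ht₀ b)) (lt_irrefl _)
      rw [hv]
      simp only [if_neg ha, if_neg hb]
      have h1 : (a.val:ℝ) < b.val := by exact_mod_cast hab
      nlinarith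
  have hvnn : ∀ m, 0 ≤ v m := by
    intro m
    rw [hv]
    dsimp only
    split
    · norm_num
    · positivity
  refine ⟨v, hmono.injective, hvnn, ?_⟩
  have hcast : ∀ a b : Fin n, ((((a : ℕ)) : ℝ) < (((b : ℕ)) : ℝ)) ↔ a < b := by
    intro a b
    rw [Nat.cast_lt]
    exact (Fin.lt_def).symm
  have hrun : ∀ (u : ℝ) (σ : Equiv.Perm (Fin n)) (m : Fin n),
      m ∈ Alg.run u (fun j => v (σ j)) ↔ m ∈ Alg.run u (fun j => ((σ j : ℕ) : ℝ)) := by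
    intro u σ m
    refine Alg.rankBased u _ _ m (fun j j' _ _ => ?_)
    rw [hmono.lt_iff_lt, hcast]
  -- nonnegativity of TOPval
  have hTOPnn : ∀ (A : Finset (Fin n)) (w : Fin n → ℝ), 0 ≤ TOPval ℓ A w := by
    intro A w
    refine Finset.le_max' _ _ ?_
    refine Finset.mem_image.2 ⟨∅, Finset.mem_filter.2 ⟨Finset.empty_mem_powerset A, by simp⟩, ?_⟩
    simp
  -- pointwise TOP bound
  have hTOPle : ∀ (u : ℝ) (σ : Equiv.Perm (Fin n)),
      TOPval ℓ (Alg.run u (fun j => v (σ j))) (fun j => v (σ j))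
        ≤ (if σ.symm t₀ ∈ Alg.run u (fun j => ((σ j : ℕ):ℝ)) then (1:ℝ) else 0)
          + (n:ℝ)^2 * δ := by
    intro u σ
    apply Finset.max'_le
    intro x hx
    obtain ⟨B, hB, rfl⟩ := Finset.mem_image.1 hx
    rw [Finset.mem_filter] at hB
    obtain ⟨hBpow, hBcard⟩ := hB
    have hBsub := Finset.mem_powerset.1 hBpow
    rw [← Finset.sum_filter_add_sum_filter_not B (fun j => σ j = t₀) (fun j => v (σ j))]
    have h2 : ∑ j ∈ B.filter (fun j => ¬ σ j = t₀), v (σ j) ≤ (n:ℝ)^2 * δ := by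
      calc ∑ j ∈ B.filter (fun j => ¬ σ j = t₀), v (σ j)
          ≤ ∑ _j ∈ B.filter (fun j => ¬ σ j = t₀), (n:ℝ)*δ :=
            Finset.sum_le_sum (fun j hj => hsmall _ (Finset.mem_filter.1 hj).2)
        _ = ((B.filter (fun j => ¬ σ j = t₀)).card : ℝ) * ((n:ℝ)*δ) := by
            rw [Finset.sum_const, nsmul_eq_mul]
        _ ≤ (n:ℝ) * ((n:ℝ)*δ) := by
            have hc : ((B.filter (fun j => ¬ σ j = t₀)).card : ℝ) ≤ (n:ℝ) := by
              have hc1 := Finset.card_filter_le B (fun j => ¬ σ j = t₀)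
              have hc2 := Finset.card_le_univ B
              have hc3 : (Finset.univ : Finset (Fin n)).card = n := by
                rw [Finset.card_univ, Fintype.card_fin]
              exact_mod_cast le_trans (le_trans hc1 hc2) (le_of_eq hc3)
            exact mul_le_mul_of_nonneg_right hc (by positivity)
        _ = (n:ℝ)^2 * δ := by ring
    have h1 : ∑ j ∈ B.filter (fun j => σ j = t₀), v (σ j)
        ≤ (if σ.symm t₀ ∈ Alg.run u (fun j => ((σ j : ℕ):ℝ)) then (1:ℝ) else 0) := by
      have hfs : B.filter (fun j => σ j = t₀) ⊆ {σ.symm t₀} := by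
        intro j hj
        rw [Finset.mem_singleton]
        have h5 := (Finset.mem_filter.1 hj).2
        rw [← h5, Equiv.symm_apply_apply]
      rcases Finset.subset_singleton_iff.1 hfs with h | h
      · rw [h]
        simp only [Finset.sum_empty]
        split <;> norm_num
      · have hjB : σ.symm t₀ ∈ B := by
          have : σ.symm t₀ ∈ B.filter (fun j => σ j = t₀) := by
            rw [h]; exact Finset.mem_singleton_self _
          exact Finset.mem_of_mem_filter _ this
        have hmem : σ.symm t₀ ∈ Alg.run u (fun j => v (σ j)) := hBsub hjB
        rw [hrun] at hmem
        rw [if_pos hmem, h, Finset.sum_singleton, Equiv.apply_symm_apply, hvt₀]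
    linarith
  set Cb : ℝ := (1 + 1/(n:ℝ)) * (1 - Real.exp (-(k:ℝ))) + (n:ℝ)^2 * δ with hCb
  have hexpk : Real.exp (-(k:ℝ)) ≤ 1 := Real.exp_le_one_iff.2 (neg_nonpos.2 (Nat.cast_nonneg k))
  have hCbnn : 0 ≤ Cb := by
    rw [hCb]
    have h1 : (0:ℝ) ≤ 1 + 1/(n:ℝ) := by positivity
    nlinarith [hδpos.le, sq_nonneg (n:ℝ)]
  -- per-seed bound
  have hF : ∀ u : ℝ, ‖((n.factorial : ℝ))⁻¹ * ∑ σ : Equiv.Perm (Fin n),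
      TOPval ℓ (Alg.run u (fun i => v (σ i))) (fun i => v (σ i))‖ ≤ Cb := by
    intro u
    have hsum_nn : 0 ≤ ∑ σ : Equiv.Perm (Fin n),
        TOPval ℓ (Alg.run u (fun i => v (σ i))) (fun i => v (σ i)) :=
      Finset.sum_nonneg (fun σ _ => hTOPnn _ _)
    have hup : ∑ σ : Equiv.Perm (Fin n),
        TOPval ℓ (Alg.run u (fun i => v (σ i))) (fun i => v (σ i))
        ≤ (n.factorial : ℝ) * Cb := by
      calc ∑ σ : Equiv.Perm (Fin n),
          TOPval ℓ (Alg.run u (fun i => v (σ i))) (fun i => v (σ i))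
          ≤ ∑ σ : Equiv.Perm (Fin n),
            ((if σ.symm t₀ ∈ Alg.run u (fun j => ((σ j : ℕ):ℝ)) then (1:ℝ) else 0)
              + (n:ℝ)^2 * δ) := Finset.sum_le_sum (fun σ _ => hTOPle u σ)
        _ = ((Finset.univ.filter fun σ : Equiv.Perm (Fin n) =>
              σ.symm t₀ ∈ Alg.run u (fun j => ((σ j : ℕ) : ℝ))).card : ℝ)
            + (n.factorial : ℝ) * ((n:ℝ)^2 * δ) := by
            rw [Finset.sum_add_distrib, Finset.sum_boole, Finset.sum_const, nsmul_eq_mul,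
              Finset.card_univ, Fintype.card_perm, Fintype.card_fin]
        _ ≤ (n.factorial : ℝ) * ((1 + 1/(n:ℝ)) * (1 - Real.exp (-(k:ℝ))))
            + (n.factorial : ℝ) * ((n:ℝ)^2 * δ) := by
            linarith [core_bound n k hn Alg u t₀ ht₀]
        _ = (n.factorial : ℝ) * Cb := by rw [hCb]; ring
    rw [Real.norm_eq_abs, abs_of_nonneg (by positivity)]
    rw [inv_mul_le_iff₀ hfacpos]
    linarith
  -- integrate
  have hIcc : (volume (Set.Icc (0:ℝ) 1)).toReal = 1 := by
    rw [Real.volume_Icc]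
    norm_num
  have hvol : volume (Set.Icc (0:ℝ) 1) < ⊤ := by
    rw [Real.volume_Icc]
    exact ENNReal.ofReal_lt_top
  have hint : (∫ u in Set.Icc (0 : ℝ) 1, ((n.factorial : ℝ))⁻¹ *
      ∑ σ : Equiv.Perm (Fin n),
        TOPval ℓ (Alg.run u (fun i => v (σ i))) (fun i => v (σ i))) ≤ Cb := by
    have h := norm_setIntegral_le_of_norm_le_const (μ := volume) (s := Set.Icc (0:ℝ) 1)
      (f := fun u => ((n.factorial : ℝ))⁻¹ * ∑ σ : Equiv.Perm (Fin n),
        TOPval ℓ (Alg.run u (fun i => v (σ i))) (fun i => v (σ i)))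
      hvol (fun u _ => hF u)
    rw [Measure.real, hIcc, mul_one] at h
    calc _ ≤ ‖∫ u in Set.Icc (0 : ℝ) 1, ((n.factorial : ℝ))⁻¹ *
          ∑ σ : Equiv.Perm (Fin n),
            TOPval ℓ (Alg.run u (fun i => v (σ i))) (fun i => v (σ i))‖ := le_abs_self _
      _ ≤ Cb := h
  -- finish
  have hTOP1 : (1:ℝ) ≤ TOPval ℓ Finset.univ v := by
    have hmem : v t₀ ∈ (Finset.univ.powerset.filter
        fun B : Finset (Fin n) => B.card ≤ ℓ).image fun B => ∑ i ∈ B, v i := by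
      refine Finset.mem_image.2 ⟨{t₀}, Finset.mem_filter.2
        ⟨Finset.mem_powerset.2 (Finset.subset_univ _), by simp [hℓ]⟩, by simp⟩
    have h6 := Finset.le_max' _ _ hmem
    exact le_trans (le_of_eq hvt₀.symm) h6
  have hcoef : Cb ≤ (1 + 1 / (n : ℝ)) * (1 - Real.exp (-(k : ℝ))) + ε := by
    rw [hCb]
    linarith
  have hcoefnn : 0 ≤ (1 + 1 / (n : ℝ)) * (1 - Real.exp (-(k : ℝ))) + ε := by
    have h1 : (0:ℝ) ≤ 1 + 1/(n:ℝ) := by positivity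
    nlinarith
  calc (∫ u in Set.Icc (0 : ℝ) 1, ((n.factorial : ℝ))⁻¹ *
      ∑ σ : Equiv.Perm (Fin n),
        TOPval ℓ (Alg.run u (fun i => v (σ i))) (fun i => v (σ i))) ≤ Cb := hint
    _ ≤ (1 + 1 / (n : ℝ)) * (1 - Real.exp (-(k : ℝ))) + ε := hcoef
    _ ≤ ((1 + 1 / (n : ℝ)) * (1 - Real.exp (-(k : ℝ))) + ε) * TOPval ℓ Finset.univ v :=
        le_mul_of_one_le_right hcoefnn hTOP1
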